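/- arXiv:2510.08124 — 2 statements merged into one kernel-verified Lean document; each statement's English description precedes it below -/
import Mathlib

section
/- Let 𝒢 = (G_1,…,G_T) be a temporal graph on n vertices in which every snapshot G_i has fewer than n/2 edges. If a k-activity ℓ-timeline 𝒯 dominates every temporal vertex of 𝒢, then T ≤ 2·k·(ℓ+1). -/
/-- If every snapshot of a temporal graph on `n` vertices has fewer than `n/2` edges and a
`k`-activity `ℓ`-timeline dominates every temporal vertex, then `T ≤ 2·k·(ℓ+1)`. -/
theorem stmt6 {V : Type*} [Fintype V] [DecidableEq V] (T k ℓ : ℕ)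
    (G : ℕ → SimpleGraph V) [∀ i, DecidableRel (G i).Adj]
    (hE : ∀ i ∈ Finset.Icc 1 T, 2 * (G i).edgeFinset.card < Fintype.card V)
    (𝒯 : Finset (V × ℕ × ℕ))
    (hI : ∀ x ∈ 𝒯, 1 ≤ x.2.1 ∧ x.2.1 ≤ x.2.2 ∧ x.2.2 ≤ T ∧ x.2.2 - x.2.1 ≤ ℓ)
    (hk : ∀ v : V, (𝒯.filter (fun x => x.1 = v)).card ≤ k)
    (hdom : ∀ v : V, ∀ i ∈ Finset.Icc 1 T, ∃ u : V, (u = v ∨ (G i).Adj u v) ∧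
      ∃ x ∈ 𝒯, x.1 = u ∧ x.2.1 ≤ i ∧ i ≤ x.2.2) :
    T ≤ 2 * k * (ℓ + 1) := by
  classical
  set n := Fintype.card V with hn
  rcases Nat.eq_zero_or_pos T with hT0 | hTpos
  · omega
  have h1T : (1 : ℕ) ∈ Finset.Icc 1 T := by simp [Finset.mem_Icc]; omega
  have hnpos : 1 ≤ n := by have := hE 1 h1T; omega
  -- active set at time i
  set S : ℕ → Finset V := fun i =>
    Finset.univ.filter (fun v => ∃ x ∈ 𝒯, x.1 = v ∧ x.2.1 ≤ i ∧ i ≤ x.2.2) with hS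
  -- Step 1: each snapshot forces many active vertices
  have step1 : ∀ i ∈ Finset.Icc 1 T, n + 1 ≤ 2 * (S i).card := by
    intro i hi
    have hcard : (Finset.univ \ S i).card ≤ (G i).edgeFinset.card := by
      have hinj : ∀ u ∈ Finset.univ \ S i,
          ∃ e ∈ (G i).edgeFinset, e = s(Classical.choose (hdom u i hi), u) := by
        intro u hu
        have hspec := Classical.choose_spec (hdom u i hi)
        set w := Classical.choose (hdom u i hi) with hw
        have hwS : w ∈ S i := by
          simp only [hS, Finset.mem_filter, Finset.mem_univ, true_and]
          exact hspec.2
        have huS : u ∉ S i := by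
          simp only [Finset.mem_sdiff] at hu; exact hu.2
        have hadj : (G i).Adj w u := by
          rcases hspec.1 with h | h
          · exact absurd (h ▸ hwS) huS
          · exact h
        exact ⟨s(w, u), by simpa [SimpleGraph.mem_edgeFinset] using hadj, rfl⟩
      apply Finset.card_le_card_of_injOn (fun u => s(Classical.choose (hdom u i hi), u))
      · intro u hu
        obtain ⟨e, he, heq⟩ := hinj u hu
        have he' := heq ▸ he
        exact he'
      · intro u hu u' hu' heq
        have huS : u ∉ S i := (Finset.mem_sdiff.mp (Finset.mem_coe.mp hu)).2
        have hspec' := Classical.choose_spec (hdom u' i hi)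
        have hw'S : Classical.choose (hdom u' i hi) ∈ S i := by
          simp only [hS, Finset.mem_filter, Finset.mem_univ, true_and]
          exact hspec'.2
        rw [Sym2.eq_iff] at heq
        rcases heq with h | h
        · exact h.2
        · -- swapped case: u = choose (hdom u' i hi) ∈ S i, contradiction
          have hu_eq : u = Classical.choose (hdom u' i hi) := h.2
          exact absurd (hu_eq ▸ hw'S) huS
    have hsub : (S i).card ≤ n := by
      simpa [hn] using Finset.card_le_univ (S i)
    have hsdiff : (Finset.univ \ S i).card = n - (S i).card := by
      rw [Finset.card_sdiff_of_subset (Finset.subset_univ _)]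
      simp [hn]
    have hEi := hE i hi
    omega
  -- Step 2: bound the active set by the number of live intervals
  have step2 : ∀ i, (S i).card ≤ (𝒯.filter (fun x => x.2.1 ≤ i ∧ i ≤ x.2.2)).card := by
    intro i
    have hsub : S i ⊆ (𝒯.filter (fun x => x.2.1 ≤ i ∧ i ≤ x.2.2)).image Prod.fst := by
      intro v hv
      simp only [hS, Finset.mem_filter, Finset.mem_univ, true_and] at hv
      obtain ⟨x, hx, hx1, hx2, hx3⟩ := hv
      exact Finset.mem_image.2 ⟨x, Finset.mem_filter.2 ⟨hx, hx2, hx3⟩, hx1⟩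
    exact le_trans (Finset.card_le_card hsub) Finset.card_image_le
  -- Step 3: total activity bound
  have step3 : ∑ i ∈ Finset.Icc 1 T, (𝒯.filter (fun x => x.2.1 ≤ i ∧ i ≤ x.2.2)).card
      ≤ 𝒯.card * (ℓ + 1) := by
    have hswap : ∑ i ∈ Finset.Icc 1 T, (𝒯.filter (fun x => x.2.1 ≤ i ∧ i ≤ x.2.2)).card
        = ∑ x ∈ 𝒯, ((Finset.Icc 1 T).filter (fun i => x.2.1 ≤ i ∧ i ≤ x.2.2)).card := by
      simp only [Finset.card_filter]
      rw [Finset.sum_comm]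
    rw [hswap]
    have hbound : ∀ x ∈ 𝒯,
        ((Finset.Icc 1 T).filter (fun i => x.2.1 ≤ i ∧ i ≤ x.2.2)).card ≤ ℓ + 1 := by
      intro x hx
      obtain ⟨h1, h2, h3, h4⟩ := hI x hx
      have hsub : (Finset.Icc 1 T).filter (fun i => x.2.1 ≤ i ∧ i ≤ x.2.2)
          ⊆ Finset.Icc x.2.1 x.2.2 := by
        intro i hi
        simp only [Finset.mem_filter, Finset.mem_Icc] at hi ⊢
        omega
      have := Finset.card_le_card hsub
      rw [Nat.card_Icc] at this
      omega
    calc ∑ x ∈ 𝒯, ((Finset.Icc 1 T).filter (fun i => x.2.1 ≤ i ∧ i ≤ x.2.2)).card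
        ≤ ∑ _x ∈ 𝒯, (ℓ + 1) := Finset.sum_le_sum hbound
      _ = 𝒯.card * (ℓ + 1) := by rw [Finset.sum_const, smul_eq_mul]
  -- Step 4: 𝒯.card ≤ n * k
  have step4 : 𝒯.card ≤ n * k := by
    have hsub : 𝒯 ⊆ Finset.univ.biUnion (fun v => 𝒯.filter (fun x => x.1 = v)) := by
      intro x hx
      exact Finset.mem_biUnion.2 ⟨x.1, Finset.mem_univ _, Finset.mem_filter.2 ⟨hx, rfl⟩⟩
    calc 𝒯.card ≤ (Finset.univ.biUnion (fun v => 𝒯.filter (fun x => x.1 = v))).card :=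
          Finset.card_le_card hsub
      _ ≤ ∑ v : V, (𝒯.filter (fun x => x.1 = v)).card := Finset.card_biUnion_le
      _ ≤ ∑ _v : V, k := Finset.sum_le_sum (fun v _ => hk v)
      _ = n * k := by simp [Finset.card_univ, hn]
  -- combine
  have hmain : T * (n + 1) ≤ 2 * (n * k) * (ℓ + 1) := by
    calc T * (n + 1) = ∑ _i ∈ Finset.Icc 1 T, (n + 1) := by
          rw [Finset.sum_const, smul_eq_mul, Nat.card_Icc]
          have h : T + 1 - 1 = T := by omega
          rw [h]
      _ ≤ ∑ i ∈ Finset.Icc 1 T, 2 * (S i).card := Finset.sum_le_sum step1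
      _ ≤ ∑ i ∈ Finset.Icc 1 T, 2 * (𝒯.filter (fun x => x.2.1 ≤ i ∧ i ≤ x.2.2)).card :=
          Finset.sum_le_sum (fun i _ => Nat.mul_le_mul_left 2 (step2 i))
      _ = 2 * ∑ i ∈ Finset.Icc 1 T, (𝒯.filter (fun x => x.2.1 ≤ i ∧ i ≤ x.2.2)).card := by
          rw [Finset.mul_sum]
      _ ≤ 2 * (𝒯.card * (ℓ + 1)) := Nat.mul_le_mul_left 2 step3
      _ ≤ 2 * (n * k) * (ℓ + 1) := by
          have := Nat.mul_le_mul_right (ℓ + 1) step4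
          nlinarith
  by_contra hcon
  push_neg at hcon
  have hT' : 2 * k * (ℓ + 1) + 1 ≤ T := hcon
  nlinarith [Nat.mul_le_mul_right (n + 1) hT']
end

section
/- Let k' ≥ k_v ≥ 0 and ℓ = 1, and consider time steps T+1, …, T+2k'. Suppose a vertex pair v, v* must each be 'handled' as follows: in each of the 2(k'−k_v) time steps T+1,…,T+2(k'−k_v) both v and v* are isolated (so each must be active there to be dominated), and in each of the last 2k_v time steps they are adjacent only to each other (so at least one of them must be active there). If every activity interval has length exactly at most 1 (covering at most 2 consecutive time steps), then any valid assignment uses at least (k'−k_v) intervals of v and (k'−k_v) intervals of v* within [T+1, T+2(k'−k_v)], and at least k_v further intervals of v or v* within [T+2(k'−k_v)+1, T+2k']; consequently at most k_v intervals of v and v* combined can intersect the time steps 1,…,T. -/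
lemma cover_lemma (S : Finset (Fin 2 × ℕ × ℕ)) (P : Fin 2 × ℕ × ℕ → Prop) [DecidablePred P]
    (hI : ∀ x ∈ S, x.2.2 ≤ x.2.1 + 1)
    (p m : ℕ)
    (h : ∀ j ∈ Finset.Icc 1 m, ∃ x ∈ S, P x ∧ x.2.1 ≤ p + 2*j ∧ p + 2*j ≤ x.2.2) :
    m ≤ (S.filter (fun x => P x ∧ p+1 ≤ x.2.1 ∧ x.2.1 ≤ p + 2*m)).card := by
  classical
  have key := Finset.card_le_card_of_injOn
    (f := fun j => if hj : j ∈ Finset.Icc 1 m then (h j hj).choose else default)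
    (s := Finset.Icc 1 m)
    (t := S.filter (fun x => P x ∧ p+1 ≤ x.2.1 ∧ x.2.1 ≤ p + 2*m)) ?_ ?_
  · simpa using key
  · intro j hj
    simp only [Finset.mem_coe] at hj ⊢
    simp only [dif_pos hj]
    obtain ⟨hS, hP, ha, hb⟩ := (h j hj).choose_spec
    have hab := hI _ hS
    simp only [Finset.mem_Icc] at hj
    refine Finset.mem_filter.mpr ⟨hS, hP, ?_, ?_⟩ <;> omega
  · intro j hj j' hj' heq
    simp only [Finset.coe_Icc, Set.mem_Icc] at hj hj'
    have hj1 : j ∈ Finset.Icc 1 m := Finset.mem_Icc.mpr hj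
    have hj1' : j' ∈ Finset.Icc 1 m := Finset.mem_Icc.mpr hj'
    simp only [dif_pos hj1, dif_pos hj1'] at heq
    obtain ⟨hS, hP, ha, hb⟩ := (h j hj1).choose_spec
    obtain ⟨hS', hP', ha', hb'⟩ := (h j' hj1').choose_spec
    have hab := hI _ hS
    have hab' := hI _ hS'
    rw [heq] at ha hb
    omega

/-- Counting lemma for the pair-vertex gadget (`ℓ = 1`): if in each of the time steps
`T+1, …, T+2(k'−k_v)` both vertices of the pair (indexed by `Fin 2`) are active (they are
isolated there), and in each of the time steps `T+2(k'−k_v)+1, …, T+2k'` at least one of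
them is active (they are adjacent only to each other there), and each vertex has at most
`k'` activity intervals, each of length at most `1`, then: each vertex uses at least
`k'−k_v` intervals intersecting `[T+1, T+2(k'−k_v)]`, at least `k_v` further intervals
intersect `[T+2(k'−k_v)+1, T+2k']`, and consequently at most `k_v` intervals of the two
vertices combined intersect the time steps `1, …, T`. -/
theorem stmt19 (T k' kv : ℕ) (hkv : kv ≤ k')
    (𝒯 : Finset (Fin 2 × ℕ × ℕ))
    (hI : ∀ x ∈ 𝒯, 1 ≤ x.2.1 ∧ x.2.1 ≤ x.2.2 ∧ x.2.2 - x.2.1 ≤ 1)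
    (hk : ∀ u : Fin 2, (𝒯.filter (fun x => x.1 = u)).card ≤ k')
    (hiso : ∀ i ∈ Finset.Icc (T + 1) (T + 2 * (k' - kv)), ∀ u : Fin 2,
      ∃ x ∈ 𝒯, x.1 = u ∧ x.2.1 ≤ i ∧ i ≤ x.2.2)
    (hpair : ∀ i ∈ Finset.Icc (T + 2 * (k' - kv) + 1) (T + 2 * k'),
      ∃ x ∈ 𝒯, x.2.1 ≤ i ∧ i ≤ x.2.2) :
    (∀ u : Fin 2, k' - kv ≤ (𝒯.filter (fun x =>
        x.1 = u ∧ x.2.1 ≤ T + 2 * (k' - kv) ∧ T + 1 ≤ x.2.2)).card) ∧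
    kv ≤ (𝒯.filter (fun x =>
        x.2.1 ≤ T + 2 * k' ∧ T + 2 * (k' - kv) + 1 ≤ x.2.2)).card ∧
    (𝒯.filter (fun x => x.2.1 ≤ T)).card ≤ kv := by
  classical
  set m := k' - kv with hm
  have hI' : ∀ x ∈ 𝒯, x.2.2 ≤ x.2.1 + 1 := by
    intro x hx; have := hI x hx; omega
  have strong1 : ∀ u : Fin 2, m ≤ (𝒯.filter (fun x =>
      x.1 = u ∧ T + 1 ≤ x.2.1 ∧ x.2.1 ≤ T + 2 * m)).card := by
    intro u
    apply cover_lemma 𝒯 (fun x => x.1 = u) hI' T m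
    intro j hj
    simp only [Finset.mem_Icc] at hj
    obtain ⟨x, hx, h1, h2, h3⟩ := hiso (T + 2 * j) (by simp only [Finset.mem_Icc]; omega) u
    exact ⟨x, hx, h1, h2, h3⟩
  have strong2 : kv ≤ (𝒯.filter (fun x =>
      (T + 2 * m) + 1 ≤ x.2.1 ∧ x.2.1 ≤ (T + 2 * m) + 2 * kv)).card := by
    have := cover_lemma 𝒯 (fun _ => True) hI' (T + 2 * m) kv ?_
    · refine this.trans (Finset.card_le_card ?_)
      intro x hx
      simp only [Finset.mem_filter, true_and] at hx ⊢
      exact hx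
    · intro j hj
      simp only [Finset.mem_Icc] at hj
      obtain ⟨x, hx, h1, h2⟩ := hpair (T + 2 * m + 2 * j) (by simp only [Finset.mem_Icc]; omega)
      exact ⟨x, hx, trivial, h1, h2⟩
  refine ⟨?_, ?_, ?_⟩
  · intro u
    refine (strong1 u).trans (Finset.card_le_card ?_)
    intro x hx
    simp only [Finset.mem_filter] at hx ⊢
    have := hI x hx.1
    exact ⟨hx.1, hx.2.1, by omega, by omega⟩
  · refine strong2.trans (Finset.card_le_card ?_)
    intro x hx
    simp only [Finset.mem_filter] at hx ⊢
    have := hI x hx.1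
    refine ⟨hx.1, by omega, by omega⟩
  · set S0 := 𝒯.filter (fun x => x.1 = (0 : Fin 2) ∧ T + 1 ≤ x.2.1 ∧ x.2.1 ≤ T + 2 * m) with hS0
    set S1 := 𝒯.filter (fun x => x.1 = (1 : Fin 2) ∧ T + 1 ≤ x.2.1 ∧ x.2.1 ≤ T + 2 * m) with hS1
    set S2 := 𝒯.filter (fun x => (T + 2 * m) + 1 ≤ x.2.1 ∧ x.2.1 ≤ (T + 2 * m) + 2 * kv) with hS2
    set C := 𝒯.filter (fun x => x.2.1 ≤ T) with hC
    have htwo : ∀ u : Fin 2, u = 0 ∨ u = 1 := by decide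
    have hcardT : 𝒯.card ≤ 2 * k' := by
      have hsub : 𝒯 ⊆ 𝒯.filter (fun x => x.1 = (0:Fin 2)) ∪ 𝒯.filter (fun x => x.1 = (1:Fin 2)) := by
        intro x hx
        simp only [Finset.mem_union, Finset.mem_filter]
        rcases htwo x.1 with h | h
        · exact Or.inl ⟨hx, h⟩
        · exact Or.inr ⟨hx, h⟩
      calc 𝒯.card ≤ _ := Finset.card_le_card hsub
        _ ≤ _ := Finset.card_union_le _ _
        _ ≤ 2 * k' := by have := hk 0; have := hk 1; omega
    have d01 : Disjoint S0 S1 := by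
      rw [Finset.disjoint_left]
      intro x h0 h1
      simp only [hS0, hS1, Finset.mem_filter] at h0 h1
      rw [h0.2.1] at h1; exact absurd h1.2.1 (by decide)
    have d2 : Disjoint (S0 ∪ S1) S2 := by
      rw [Finset.disjoint_left]
      intro x h0 h1
      simp only [hS0, hS1, hS2, Finset.mem_union, Finset.mem_filter] at h0 h1
      rcases h0 with h0 | h0 <;> omega
    have dC : Disjoint (S0 ∪ S1 ∪ S2) C := by
      rw [Finset.disjoint_left]
      intro x h0 h1
      simp only [hS0, hS1, hS2, hC, Finset.mem_union, Finset.mem_filter] at h0 h1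
      rcases h0 with (h0 | h0) | h0 <;> omega
    have hsub : S0 ∪ S1 ∪ S2 ∪ C ⊆ 𝒯 := by
      intro x hx
      simp only [hS0, hS1, hS2, hC, Finset.mem_union, Finset.mem_filter] at hx
      rcases hx with ((h | h) | h) | h <;> exact h.1
    have hcards : S0.card + S1.card + S2.card + C.card ≤ 2 * k' := by
      have e1 : (S0 ∪ S1).card = S0.card + S1.card := Finset.card_union_of_disjoint d01
      have e2 : (S0 ∪ S1 ∪ S2).card = (S0 ∪ S1).card + S2.card := Finset.card_union_of_disjoint d2
      have e3 : (S0 ∪ S1 ∪ S2 ∪ C).card = (S0 ∪ S1 ∪ S2).card + C.card := Finset.card_union_of_disjoint dC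
      have := Finset.card_le_card hsub
      omega
    have h0 : m ≤ S0.card := strong1 0
    have h1 : m ≤ S1.card := strong1 1
    omega
end
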